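/- Let T be a finite set of TGDs and ΣD, ΣQ schemas. Then T is ΣD,ΣQ-hom-trivial if and only if T is ΣD,ΣQ-CQ-trivial. -/

import Mathlib

set_option autoImplicit false

/-! ### Terms: constants from 𝐂 (coded `Term.const n`) and nulls from 𝐍 (coded `Term.null n`) -/

inductive Term : Type
  | const : ℕ → Term
  | null  : ℕ → Term
deriving DecidableEq

def Term.isConst : Term → Prop
  | .const _ => True
  | .null _  => False

def termEquiv : Term ≃ ℕ ⊕ ℕ where
  toFun t := match t with
    | .const n => Sum.inl n
    | .null n  => Sum.inr n
  invFun x := match x with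
    | Sum.inl n => .const n
    | Sum.inr n => .null n
  left_inv t := by cases t <;> rfl
  right_inv x := by cases x <;> rfl

instance : Primcodable Term := Primcodable.ofEquiv _ termEquiv

/-! ### Relation symbols (with arity) and schemas -/

structure RelSym : Type where
  name : ℕ
  arity : ℕ
deriving DecidableEq

def relSymEquiv : RelSym ≃ ℕ × ℕ where
  toFun r := (r.name, r.arity)
  invFun p := ⟨p.1, p.2⟩
  left_inv r := rfl
  right_inv p := rfl

instance : Primcodable RelSym := Primcodable.ofEquiv _ relSymEquiv

/-- A schema is a set of relation symbols. -/
abbrev Schema := Set RelSym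

/-! ### Facts, instances, databases -/

structure Fct : Type where
  rel : RelSym
  args : List Term
deriving DecidableEq

def fctEquiv : Fct ≃ RelSym × List Term where
  toFun f := (f.rel, f.args)
  invFun p := ⟨p.1, p.2⟩
  left_inv f := rfl
  right_inv p := rfl

instance : Primcodable Fct := Primcodable.ofEquiv _ fctEquiv

/-- A fact is well-formed if its argument tuple matches the arity of its relation symbol
(arities are ≥ 1). -/
def Fct.wf (f : Fct) : Prop := f.args.length = f.rel.arity ∧ 1 ≤ f.rel.arity

/-- An instance is a (possibly infinite) set of facts. -/
abbrev Inst := Set Fct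

/-- The active domain of an instance. -/
def adom (I : Inst) : Set Term := { t | ∃ f ∈ I, t ∈ f.args }

/-- A database: a finite instance of well-formed facts using only constants from 𝐂. -/
def IsDB (I : Inst) : Prop :=
  I.Finite ∧ ∀ f ∈ I, f.wf ∧ ∀ t ∈ f.args, t.isConst

/-- `I` is a Σ-instance. -/
def InstOver (I : Inst) (S : Schema) : Prop := ∀ f ∈ I, f.rel ∈ S ∧ f.wf

/-- `I` is a Σ-database. -/
def IsDatabase (I : Inst) (S : Schema) : Prop := IsDB I ∧ ∀ f ∈ I, f.rel ∈ S

/-! ### Homomorphisms -/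

def Fct.map (h : Term → Term) (f : Fct) : Fct := ⟨f.rel, f.args.map h⟩

/-- `h` is a Σ-homomorphism from `I` to `J`. -/
def IsHomOn (S : Schema) (h : Term → Term) (I J : Inst) : Prop :=
  ∀ f ∈ I, f.rel ∈ S → f.map h ∈ J

/-- `h` is a homomorphism from `I` to `J` (all relation symbols). -/
def IsFullHom (h : Term → Term) (I J : Inst) : Prop := ∀ f ∈ I, f.map h ∈ J

/-- `h` is database-preserving: it is the identity on all constants from 𝐂. -/
def DBPres (h : Term → Term) : Prop := ∀ n : ℕ, h (Term.const n) = Term.const n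

/-- `I →_Σ J`: there is a database-preserving Σ-homomorphism from `I` to `J`. -/
def HomTo (S : Schema) (I J : Inst) : Prop := ∃ h, DBPres h ∧ IsHomOn S h I J

/-- The induced subinstance of `I` on a set `A` of terms. -/
def restrict (I : Inst) (A : Set Term) : Inst := { f | f ∈ I ∧ ∀ t ∈ f.args, t ∈ A }

/-- `I →ⁿ_Σ J`: every induced subinstance of `I` with at most `n` active-domain elements
admits a database-preserving Σ-homomorphism to `J`. -/
def HomN (S : Schema) (n : ℕ) (I J : Inst) : Prop :=
  ∀ A : Set Term, A ⊆ adom I → A.Finite → A.ncard ≤ n → HomTo S (restrict I A) J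

/-- `I →^lim_Σ J`. -/
def HomLim (S : Schema) (I J : Inst) : Prop := ∀ n : ℕ, 1 ≤ n → HomN S n I J

/-- Homomorphic equivalence of instances. -/
def HomEquiv (I J : Inst) : Prop := (∃ h, IsFullHom h I J) ∧ (∃ h, IsFullHom h J I)

/-! ### Gaifman graph and connectedness -/

def coOccur (I : Inst) (a b : Term) : Prop := ∃ f ∈ I, a ∈ f.args ∧ b ∈ f.args

/-- The Gaifman graph of `I` is connected. -/
def Connected (I : Inst) : Prop :=
  ∀ a ∈ adom I, ∀ b ∈ adom I, Relation.ReflTransGen (coOccur I) a b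

/-- Restriction `I|_Σ` of `I` to the facts using a relation symbol from Σ. -/
def restrS (I : Inst) (S : Schema) : Inst := { f | f ∈ I ∧ f.rel ∈ S }

/-- `I` is Σ-connected. -/
def SConnected (S : Schema) (I : Inst) : Prop := Connected (restrS I S)

/-- `C` is a maximally Σ-connected component of `I`. -/
def MaxConnComp (S : Schema) (I C : Inst) : Prop :=
  C ⊆ restrS I S ∧ Connected C ∧
    ∀ C', C ⊆ C' → C' ⊆ restrS I S → Connected C' → C' = C

/-! ### Conjunctive queries -/

structure Atom : Type where
  rel : RelSym
  args : List ℕ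
deriving DecidableEq

def atomEquiv : Atom ≃ RelSym × List ℕ where
  toFun a := (a.rel, a.args)
  invFun p := ⟨p.1, p.2⟩
  left_inv a := rfl
  right_inv p := rfl

instance : Primcodable Atom := Primcodable.ofEquiv _ atomEquiv

def Atom.wf (a : Atom) : Prop := a.args.length = a.rel.arity ∧ 1 ≤ a.rel.arity

/-- Instantiate an atom by an assignment of terms to variables. -/
def Atom.inst (h : ℕ → Term) (a : Atom) : Fct := ⟨a.rel, a.args.map h⟩

/-- A conjunctive query: a finite set of relational atoms (as a list) together with a
tuple of answer variables. -/
structure CQ : Type where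
  atoms : List Atom
  ans : List ℕ
deriving DecidableEq

def cqEquiv : CQ ≃ List Atom × List ℕ where
  toFun q := (q.atoms, q.ans)
  invFun p := ⟨p.1, p.2⟩
  left_inv q := rfl
  right_inv p := rfl

instance : Primcodable CQ := Primcodable.ofEquiv _ cqEquiv

/-- `q` is a CQ over schema Σ. -/
def CQ.Over (q : CQ) (S : Schema) : Prop := ∀ a ∈ q.atoms, a.rel ∈ S ∧ a.wf

/-- A homomorphism from `q` to `I`. -/
def CQHom (q : CQ) (I : Inst) (h : ℕ → Term) : Prop := ∀ a ∈ q.atoms, a.inst h ∈ I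

/-- `c̄` is an answer to `q` on `I`. -/
def IsAnswer (q : CQ) (I : Inst) (c : List Term) : Prop :=
  (∀ x ∈ c, x ∈ adom I) ∧ ∃ h, CQHom q I h ∧ q.ans.map h = c

/-- The canonical database of a CQ (variables viewed as constants/nulls). -/
def canonDB (q : CQ) : Inst := { f | ∃ a ∈ q.atoms, f = a.inst Term.null }

/-! ### Tuple-generating dependencies -/

/-- A TGD `∀x̄∀ȳ (φ(x̄,ȳ) → ∃z̄ ψ(x̄,z̄))`, with `frontier` the tuple `x̄` of
frontier variables. -/
structure TGD : Type where
  body : List Atom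
  head : List Atom
  frontier : List ℕ
deriving DecidableEq

def tgdEquiv : TGD ≃ List Atom × List Atom × List ℕ where
  toFun t := (t.body, t.head, t.frontier)
  invFun p := ⟨p.1, p.2.1, p.2.2⟩
  left_inv t := rfl
  right_inv p := rfl

instance : Primcodable TGD := Primcodable.ofEquiv _ tgdEquiv

def TGD.bodyVars (t : TGD) : Set ℕ := { x | ∃ a ∈ t.body, x ∈ a.args }
def TGD.headVars (t : TGD) : Set ℕ := { x | ∃ a ∈ t.head, x ∈ a.args }

/-- Well-formedness of a TGD: atoms are well-formed, the frontier variables are distinct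
body variables, and every variable shared by body and head is a frontier variable. -/
def TGD.wf (t : TGD) : Prop :=
  (∀ a ∈ t.body, a.wf) ∧ (∀ a ∈ t.head, a.wf) ∧ t.frontier.Nodup ∧
  (∀ x ∈ t.frontier, x ∈ t.bodyVars) ∧
  (∀ x, x ∈ t.bodyVars → x ∈ t.headVars → x ∈ t.frontier)

/-- A TGD is linear if its body contains at most one atom. -/
def TGD.Linear (t : TGD) : Prop := t.body.length ≤ 1

/-- A TGD is guarded if some body atom contains all body variables. -/
def TGD.Guarded (t : TGD) : Prop := ∃ a ∈ t.body, ∀ x, x ∈ t.bodyVars → x ∈ a.args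

/-- A TGD is frontier-one if it has exactly one frontier variable. -/
def TGD.FrontierOne (t : TGD) : Prop := t.frontier.length = 1

/-- `I ⊨ ϑ`. -/
def TGD.Satisfies (I : Inst) (t : TGD) : Prop :=
  ∀ g : ℕ → Term, (∀ a ∈ t.body, a.inst g ∈ I) →
    ∃ h : ℕ → Term, (∀ a ∈ t.head, a.inst h ∈ I) ∧ ∀ x ∈ t.frontier, h x = g x

/-- `I` is a model of the set `T` of TGDs. -/
def IsModel (I : Inst) (T : List TGD) : Prop := ∀ t ∈ T, TGD.Satisfies I t

/-- Number of (distinct) variables in the body of a TGD. -/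
def TGD.bodyVarList (t : TGD) : List ℕ := ((t.body.map Atom.args).flatten).dedup

/-- The body width of a set of TGDs. -/
def bodyWidth (T : List TGD) : ℕ := (T.map (fun t => t.bodyVarList.length)).foldr max 0

/-! ### The chase -/

/-- `ϑ` is applicable at tuple `c̄` in `I`. -/
def TGD.Applicable (t : TGD) (I : Inst) (c : List Term) : Prop :=
  (∃ g : ℕ → Term, (∀ a ∈ t.body, a.inst g ∈ I) ∧ t.frontier.map g = c) ∧
  ¬ (∃ h : ℕ → Term, (∀ a ∈ t.head, a.inst h ∈ I) ∧ t.frontier.map h = c)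

/-- `J` is the result of applying `ϑ` in `I` at `c̄`: the head is added, with the
existential variables replaced by distinct fresh nulls. -/
def TGD.StepResult (t : TGD) (I : Inst) (c : List Term) (J : Inst) : Prop :=
  ∃ h : ℕ → Term,
    t.frontier.map h = c ∧
    (∀ x, x ∈ t.headVars → x ∉ t.frontier → (¬ (h x).isConst ∧ h x ∉ adom I)) ∧
    (∀ x y, x ∈ t.headVars → y ∈ t.headVars → x ∉ t.frontier → y ∉ t.frontier →
      h x = h y → x = y) ∧
    J = I ∪ { f | ∃ a ∈ t.head, f = a.inst h }

/-- A chase step from `I` to `J` with some TGD of `T`. -/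
def ChaseStep (T : List TGD) (I J : Inst) : Prop :=
  ∃ t ∈ T, ∃ c, t.Applicable I c ∧ t.StepResult I c J

/-- A chase sequence for `I` with `T` (stalling when no TGD is applicable). -/
def IsChaseSeq (T : List TGD) (I : Inst) (f : ℕ → Inst) : Prop :=
  f 0 = I ∧ ∀ i, ChaseStep T (f i) (f (i+1)) ∨ ((¬ ∃ J, ChaseStep T (f i) J) ∧ f (i+1) = f i)

/-- Fairness: every applicable TGD application is eventually performed or becomes
non-applicable. -/
def IsFair (T : List TGD) (f : ℕ → Inst) : Prop :=
  ∀ i, ∀ t ∈ T, ∀ c, TGD.Applicable t (f i) c →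
    ∃ j, i ≤ j ∧
      ((TGD.Applicable t (f j) c ∧ TGD.StepResult t (f j) c (f (j+1))) ∨
        ¬ TGD.Applicable t (f j) c)

/-- `J` is the result of some fair chase sequence for `I` with `T`. -/
def IsChaseResult (T : List TGD) (I J : Inst) : Prop :=
  ∃ f : ℕ → Inst, IsChaseSeq T I f ∧ IsFair T f ∧ J = ⋃ i, f i

/-- `chase T I`: the result of an arbitrary but fixed fair chase sequence for `I` with `T`. -/
noncomputable def chase (T : List TGD) (I : Inst) : Inst :=
  @dite _ (∃ J, IsChaseResult T I J) (Classical.dec _) (fun h => h.choose) (fun _ => I)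

/-! ### Query answering w.r.t. TGDs and conservativity notions -/

/-- `c̄ ∈ q_T(D)`: `c̄` is a tuple over `adom D` and an answer to `q` on `chase T D`. -/
def AnswerWrt (q : CQ) (T : List TGD) (D : Inst) (c : List Term) : Prop :=
  (∀ x ∈ c, x ∈ adom D) ∧ ∃ h, CQHom q (chase T D) h ∧ q.ans.map h = c

/-- `T2` is `ΣD,ΣQ`-hom-conservative over `T1`. -/
def HomConservative (T1 T2 : List TGD) (SD SQ : Schema) : Prop :=
  ∀ D, IsDatabase D SD → HomTo SQ (chase T2 D) (chase T1 D)

/-- `T2` is `ΣD,ΣQ`-CQ-conservative over `T1`. -/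
def CQConservative (T1 T2 : List TGD) (SD SQ : Schema) : Prop :=
  ∀ D, IsDatabase D SD → ∀ q : CQ, CQ.Over q SQ →
    ∀ c, AnswerWrt q T2 D c → AnswerWrt q T1 D c

/-- `T` is `ΣD,ΣQ`-hom-trivial. -/
def HomTrivial (T : List TGD) (SD SQ : Schema) : Prop :=
  ∀ D, IsDatabase D SD → HomTo SQ (chase T D) D

/-- `T` is `ΣD,ΣQ`-CQ-trivial. -/
def CQTrivial (T : List TGD) (SD SQ : Schema) : Prop :=
  ∀ D, IsDatabase D SD → ∀ q : CQ, CQ.Over q SQ →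
    ∀ c, AnswerWrt q T D c → IsAnswer q D c


/-! ### Auxiliary lemmas for the proof -/

private lemma chaseStep_subset {T : List TGD} {I J : Inst} (h : ChaseStep T I J) : I ⊆ J := by
  obtain ⟨t, _, c, _, g, _, _, _, hJ⟩ := h
  rw [hJ]; exact Set.subset_union_left

private lemma chaseSeq_mono {T : List TGD} {D : Inst} {f : ℕ → Inst}
    (hf : IsChaseSeq T D f) : ∀ i j, i ≤ j → f i ⊆ f j := by
  intro i j hij
  induction j with
  | zero => cases Nat.le_zero.mp hij; exact fun _ h => h
  | succ j ih =>
    have hstep : f j ⊆ f (j+1) := by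
      rcases hf.2 j with h | ⟨_, h⟩
      · exact chaseStep_subset h
      · rw [h]
    rcases Nat.lt_or_ge i (j+1) with h | h
    · exact fun x hx => hstep (ih (Nat.lt_succ_iff.mp h) hx)
    · have : i = j + 1 := le_antisymm hij h
      subst this; exact fun _ h => h

private lemma chaseStep_finite {T : List TGD} {I J : Inst} (h : ChaseStep T I J)
    (hI : I.Finite) : J.Finite := by
  obtain ⟨t, _, c, _, g, _, _, _, hJ⟩ := h
  rw [hJ]
  refine hI.union ?_
  have : {f | ∃ a ∈ t.head, f = a.inst g} = (fun a => a.inst g) '' {a | a ∈ t.head} := by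
    ext F; simp only [Set.mem_setOf_eq, Set.mem_image]
    constructor
    · rintro ⟨a, ha, rfl⟩; exact ⟨a, ha, rfl⟩
    · rintro ⟨a, ha, rfl⟩; exact ⟨a, ha, rfl⟩
  rw [this]
  exact (t.head.finite_toSet).image _

private lemma chaseSeq_finite {T : List TGD} {D : Inst} {f : ℕ → Inst}
    (hf : IsChaseSeq T D f) (hD : D.Finite) : ∀ i, (f i).Finite := by
  intro i
  induction i with
  | zero => rw [hf.1]; exact hD
  | succ i ih =>
    rcases hf.2 i with h | ⟨_, h⟩
    · exact chaseStep_finite h ih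
    · rw [h]; exact ih

/-- Good facts: well-formed and constant arguments come from `adom D`. -/
private def GoodInst (D : Inst) (I : Inst) : Prop :=
  ∀ F ∈ I, F.wf ∧ ∀ t ∈ F.args, t.isConst → t ∈ adom D

private lemma chaseStep_good {T : List TGD} {D I J : Inst} (hT : ∀ t ∈ T, t.wf)
    (hQ : GoodInst D I) (h : ChaseStep T I J) : GoodInst D J := by
  obtain ⟨t, htT, c, ⟨⟨g, hgbody, hgfr⟩, _⟩, hstep⟩ := h
  obtain ⟨h, hhfr, hfresh, _, hJ⟩ := hstep
  have htwf := hT t htT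
  -- for frontier variables, h x = g x
  have hfreq : ∀ x ∈ t.frontier, h x = g x := by
    have := hhfr.trans hgfr.symm
    exact List.map_inj_left.mp this
  intro F hF
  rw [hJ] at hF
  rcases hF with hF | ⟨a, ha, rfl⟩
  · exact hQ F hF
  · have hawf : a.wf := htwf.2.1 a ha
    constructor
    · constructor
      · simpa [Atom.inst, Fct.wf] using hawf.1
      · exact hawf.2
    · intro s hs hconst
      simp only [Atom.inst] at hs
      obtain ⟨x, hx, rfl⟩ := List.mem_map.mp hs
      have hxhead : x ∈ t.headVars := ⟨a, ha, hx⟩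
      by_cases hxfr : x ∈ t.frontier
      · -- h x = g x ∈ adom I
        rw [hfreq x hxfr] at hconst ⊢
        have hxbody : x ∈ t.bodyVars := htwf.2.2.2.1 x hxfr
        obtain ⟨b, hb, hxb⟩ := hxbody
        have : b.inst g ∈ I := hgbody b hb
        have hmem : g x ∈ (b.inst g).args := by
          simp only [Atom.inst]; exact List.mem_map.mpr ⟨x, hxb, rfl⟩
        exact (hQ _ this).2 _ hmem hconst
      · exact absurd hconst (hfresh x hxhead hxfr).1

private lemma chaseSeq_good {T : List TGD} {D : Inst} {f : ℕ → Inst} (hT : ∀ t ∈ T, t.wf)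
    (hf : IsChaseSeq T D f) (hD : IsDB D) : ∀ i, GoodInst D (f i) := by
  intro i
  induction i with
  | zero =>
    rw [hf.1]
    intro F hF
    refine ⟨(hD.2 F hF).1, fun t ht _ => ⟨F, hF, ht⟩⟩
  | succ i ih =>
    rcases hf.2 i with h | ⟨_, h⟩
    · exact chaseStep_good hT ih h
    · rw [h]; exact ih

/-- Lemma 5: `T` is `ΣD,ΣQ`-hom-trivial iff it is `ΣD,ΣQ`-CQ-trivial. -/
theorem hom_trivial_iff_cq_trivial (T : List TGD) (SD SQ : Schema) (hT : ∀ t ∈ T, t.wf) :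
    HomTrivial T SD SQ ↔ CQTrivial T SD SQ := by
  classical
  have hadomfin : ∀ D : Inst, IsDatabase D SD → (adom D).Finite := by
    intro D hD
    refine Set.Finite.subset (hD.1.1.biUnion (fun F _ => F.args.finite_toSet)) ?_
    rintro t ⟨F, hF, ht⟩
    exact Set.mem_biUnion hF ht
  constructor
  · -- hom-trivial → CQ-trivial
    intro hhom D hD q hq c hc
    obtain ⟨hcadom, g, hghom, hgans⟩ := hc
    obtain ⟨h, hpres, hhomon⟩ := hhom D hD
    refine ⟨hcadom, fun x => h (g x), ?_, ?_⟩
    · intro a ha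
      have h1 : (a.inst g).map h ∈ D :=
        hhomon _ (hghom a ha) (hq a ha).1
      simpa [Atom.inst, Fct.map, List.map_map, Function.comp_def] using h1
    · have hfix : ∀ x ∈ c, h x = x := by
        intro x hx
        obtain ⟨F, hF, hxF⟩ := hcadom x hx
        have hic := (hD.1.2 F hF).2 x hxF
        cases x with
        | const m => exact hpres m
        | null m => cases hic
      calc q.ans.map (fun x => h (g x)) = (q.ans.map g).map h := by
            rw [List.map_map]; rfl
        _ = c.map h := by rw [hgans]
        _ = c := by
            conv_rhs => rw [← List.map_id c]
            exact List.map_congr_left hfix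
  · -- CQ-trivial → hom-trivial
    intro hcq D hD
    by_cases hex : ∃ J, IsChaseResult T D J
    · have hres : IsChaseResult T D (chase T D) := by
        unfold chase; rw [dif_pos hex]; exact hex.choose_spec
      obtain ⟨f, hseq, hfair, hC⟩ := hres
      have hmono := chaseSeq_mono hseq
      have hfin := chaseSeq_finite hseq hD.1.1
      have hgood := chaseSeq_good hT hseq hD.1
      have hsubC : ∀ n, f n ⊆ chase T D := by
        intro n x hx; rw [hC]; exact Set.mem_iUnion.mpr ⟨n, hx⟩
      -- constants list
      set cL : List Term := (hadomfin D hD).toFinset.toList with hcLdef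
      have hcL : ∀ t : Term, t ∈ cL ↔ t ∈ adom D := by
        intro t
        rw [hcLdef, Finset.mem_toList, Set.Finite.mem_toFinset]
      -- decoding
      set dec : ℕ → Term := fun k => ((Encodable.decode k : Option Term)).getD (Term.const 0)
        with hdecdef
      have hdec : ∀ t : Term, dec (Encodable.encode t) = t := by
        intro t; rw [hdecdef]; simp [Encodable.encodek]
      -- per-level homomorphisms via CQ-triviality
      have key : ∀ n, ∃ g : Term → Term, (∀ m, g (.const m) = .const m) ∧
          ∀ F ∈ f n, F.rel ∈ SQ → F.map g ∈ D := by
        intro n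
        set facts : List Fct := ((hfin n).toFinset.toList).filter (fun F => F.rel ∈ SQ)
          with hfactsdef
        have hfacts : ∀ F : Fct, F ∈ facts ↔ F ∈ f n ∧ F.rel ∈ SQ := by
          intro F
          rw [hfactsdef, List.mem_filter, Finset.mem_toList, Set.Finite.mem_toFinset]
          simp
        set q : CQ := ⟨facts.map (fun F => ⟨F.rel, F.args.map Encodable.encode⟩),
          cL.map Encodable.encode⟩ with hqdef
        have hover : CQ.Over q SQ := by
          intro a ha
          rw [hqdef] at ha
          obtain ⟨F, hF, rfl⟩ := List.mem_map.mp ha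
          obtain ⟨hFn, hFS⟩ := (hfacts F).mp hF
          have hwf := (hgood n F hFn).1
          exact ⟨hFS, by simpa [Atom.wf, Fct.wf] using hwf⟩
        have hans : AnswerWrt q T D cL := by
          refine ⟨fun x hx => (hcL x).mp hx, dec, ?_, ?_⟩
          · intro a ha
            rw [hqdef] at ha
            obtain ⟨F, hF, rfl⟩ := List.mem_map.mp ha
            have harg : F.args.map (dec ∘ Encodable.encode) = F.args := by
              conv_rhs => rw [← List.map_id F.args]
              exact List.map_congr_left fun t _ => hdec t
            have : Atom.inst dec ⟨F.rel, F.args.map Encodable.encode⟩ = F := by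
              simp [Atom.inst, List.map_map, harg]
            rw [this]
            exact hsubC n ((hfacts F).mp hF).1
          · rw [hqdef]
            simp only [List.map_map]
            conv_rhs => rw [← List.map_id cL]
            exact List.map_congr_left (fun t _ => hdec t)
        obtain ⟨_, hn, hnhom, hnans⟩ := hcq D hD q hover cL hans
        have hnfix : ∀ t ∈ cL, hn (Encodable.encode t) = t := by
          have h1 : cL.map (fun t => hn (Encodable.encode t)) = cL.map id := by
            rw [List.map_id]
            have := hnans
            rw [hqdef] at this
            simpa [List.map_map, Function.comp_def] using this
          exact fun t ht => List.map_inj_left.mp h1 t ht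
        refine ⟨fun t => match t with
          | .const m => .const m
          | .null m => hn (Encodable.encode (Term.null m)), fun m => rfl, ?_⟩
        intro F hFn hFS
        have hatom : Atom.inst hn ⟨F.rel, F.args.map Encodable.encode⟩ ∈ D := by
          apply hnhom
          rw [hqdef]
          exact List.mem_map.mpr ⟨F, (hfacts F).mpr ⟨hFn, hFS⟩, rfl⟩
        have heq : F.map (fun t => match t with
            | .const m => .const m
            | .null m => hn (Encodable.encode (Term.null m)))
            = Atom.inst hn ⟨F.rel, F.args.map Encodable.encode⟩ := by
          simp only [Fct.map, Atom.inst, List.map_map]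
          congr 1
          apply List.map_congr_left
          intro t ht
          cases t with
          | null m => rfl
          | const m =>
            have htc : (Term.const m) ∈ adom D :=
              (hgood n F hFn).2 _ ht trivial
            exact (hnfix _ ((hcL _).mpr htc)).symm
        rw [heq]; exact hatom
      choose G hG1 hG2 using key
      -- combine via an ultrafilter
      obtain ⟨U, hU⟩ := Ultrafilter.exists_le (Filter.atTop : Filter ℕ)
      set g : Term → Term := fun t =>
        if h : ∃ v, {n | G n t = v} ∈ U then h.choose else t with hgdef
      have guniq : ∀ t v, {n | G n t = v} ∈ U → g t = v := by
        intro t v hv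
        have hex' : ∃ v, {n | G n t = v} ∈ U := ⟨v, hv⟩
        rw [hgdef]
        simp only [dif_pos hex']
        by_contra hne
        obtain ⟨m, hm1, hm2⟩ := Filter.nonempty_of_mem
          ((U : Filter ℕ).inter_sets hex'.choose_spec hv)
        exact hne (hm1.symm.trans hm2)
      refine ⟨g, ?_, ?_⟩
      · intro m
        refine guniq _ _ ?_
        have : {n | G n (Term.const m) = Term.const m} = Set.univ := by
          ext n; simp [hG1]
        rw [this]; exact Filter.univ_mem
      · intro F hF hFS
        obtain ⟨N, hFN⟩ : ∃ N, F ∈ f N := by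
          rw [hC] at hF; exact Set.mem_iUnion.mp hF
        have hatTop : {n | N ≤ n} ∈ U := hU (Filter.mem_atTop N)
        have himg : ∀ t ∈ F.args, ∀ n, N ≤ n → G n t ∈ adom D := by
          intro t ht n hn
          have hmem : F.map (G n) ∈ D := hG2 n F (hmono N n hn hFN) hFS
          refine ⟨F.map (G n), hmem, ?_⟩
          simp only [Fct.map]
          exact List.mem_map.mpr ⟨t, ht, rfl⟩
        have hst : ∀ t ∈ F.args, {n | G n t = g t} ∈ U := by
          intro t ht
          have hcover : {n | N ≤ n} ⊆ ⋃ v ∈ adom D, {n | G n t = v} := by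
            intro n hn
            exact Set.mem_biUnion (himg t ht n hn) rfl
          have : (⋃ v ∈ adom D, {n | G n t = v}) ∈ U :=
            Filter.mem_of_superset hatTop hcover
          obtain ⟨v, _, hv⟩ :=
            (Ultrafilter.finite_biUnion_mem_iff (hadomfin D hD)).mp this
          rw [guniq t v hv]; exact hv
        have hbig : ({n | N ≤ n} ∩ ⋂ t ∈ {x | x ∈ F.args}, {n | G n t = g t}) ∈ U := by
          refine (U : Filter ℕ).inter_sets hatTop ?_
          exact (Filter.biInter_mem F.args.finite_toSet).mpr (fun t ht => hst t ht)
        obtain ⟨n, hn1, hn2⟩ := Filter.nonempty_of_mem hbig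
        have heq : F.map g = F.map (G n) := by
          simp only [Fct.map]
          congr 1
          apply List.map_congr_left
          intro t ht
          have := Set.mem_iInter₂.mp hn2 t ht
          exact this.symm
        rw [heq]
        exact hG2 n F (hmono N n hn1 hFN) hFS
    · have hCD : chase T D = D := by unfold chase; rw [dif_neg hex]
      rw [hCD]
      refine ⟨id, fun n => rfl, fun F hF _ => ?_⟩
      simpa [Fct.map] using hF
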